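/- arXiv:2306.11140 — 3 statements merged into one kernel-verified Lean document; each statement's English description precedes it below -/
import Mathlib

section
/- If a poset P has finite covers (every element covers and is covered by only finitely many elements), then P is finitary (every principal order ideal is finite) if and only if P has no infinite descending chain and no bounded infinite ascending chain. -/
/-- A poset with finite covers is finitary iff it has no infinite descending
chain and no bounded infinite ascending chain. -/
theorem stmt0 {P : Type*} [PartialOrder P]
    (hcov : ∀ p : P, {q : P | q ⋖ p}.Finite ∧ {q : P | p ⋖ q}.Finite) :
    (∀ p : P, {q : P | q ≤ p}.Finite) ↔
      ((¬ ∃ f : ℕ → P, StrictAnti f) ∧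
        ¬ ∃ (f : ℕ → P) (q : P), StrictMono f ∧ ∀ n, f n < q) := by
  constructor
  · intro hfin
    refine ⟨?_, ?_⟩
    · rintro ⟨f, hf⟩
      exact (hfin (f 0)).not_infinite
        (Set.infinite_of_injective_forall_mem hf.injective
          (fun n => hf.antitone (Nat.zero_le n)))
    · rintro ⟨f, q, hf, hb⟩
      exact (hfin q).not_infinite
        (Set.infinite_of_injective_forall_mem hf.injective
          (fun n => (hb n).le))
  · rintro ⟨hdesc, hasc⟩ p
    -- For any s < r there is a lower cover t of r with s ≤ t.
    have step : ∀ r s : P, s < r → ∃ t, s ≤ t ∧ t ⋖ r := by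
      intro r s hsr
      by_contra h
      push_neg at h
      have key : ∀ t : {t : P // s ≤ t ∧ t < r},
          ∃ u : {t : P // s ≤ t ∧ t < r}, (t : P) < u := by
        rintro ⟨t, hst, htr⟩
        have hnc : ¬ t ⋖ r := fun hc => h t hst hc
        obtain ⟨u, htu, hur⟩ := (not_covBy_iff htr).mp hnc
        exact ⟨⟨u, hst.trans htu.le, hur⟩, htu⟩
      choose g hg using key
      let f : ℕ → {t : P // s ≤ t ∧ t < r} :=
        fun n => Nat.rec ⟨s, le_refl s, hsr⟩ (fun _ t => g t) n
      have hmono : StrictMono (fun n => (f n).1) := by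
        apply strictMono_nat_of_lt_succ
        intro n
        show (f n).1 < (f (n+1)).1
        exact hg (f n)
      exact hasc ⟨fun n => (f n).1, r, hmono, fun n => (f n).2.2⟩
    -- If the ideal of r is infinite, some element strictly below r has
    -- infinite ideal.
    have bad_step : ∀ r : P, {q : P | q ≤ r}.Infinite →
        ∃ t, t < r ∧ {q : P | q ≤ t}.Infinite := by
      intro r hr
      have hlt : {q : P | q < r}.Infinite := by
        have he : {q : P | q < r} = {q : P | q ≤ r} \ {r} := by
          ext q
          simp only [Set.mem_setOf_eq, Set.mem_diff, Set.mem_singleton_iff]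
          exact lt_iff_le_and_ne
        rw [he]
        exact hr.diff (Set.finite_singleton r)
      have hsub : {q : P | q < r} ⊆ ⋃ t ∈ {q : P | q ⋖ r}, {q : P | q ≤ t} := by
        intro s hs
        obtain ⟨t, hst, htc⟩ := step r s hs
        exact Set.mem_biUnion htc hst
      by_contra h
      push_neg at h
      have hfin : (⋃ t ∈ {q : P | q ⋖ r}, {q : P | q ≤ t}).Finite :=
        Set.Finite.biUnion (hcov r).1
          (fun t ht => h t ht.lt)
      exact (hlt.mono hsub) hfin
    -- Conclude: otherwise build an infinite descending chain.
    by_contra hinf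
    have hinf' : {q : P | q ≤ p}.Infinite := hinf
    have key : ∀ r : {r : P // {q : P | q ≤ r}.Infinite},
        ∃ u : {r : P // {q : P | q ≤ r}.Infinite}, (u : P) < r := by
      rintro ⟨r, hr⟩
      obtain ⟨t, htr, ht⟩ := bad_step r hr
      exact ⟨⟨t, ht⟩, htr⟩
    choose g hg using key
    let f : ℕ → {r : P // {q : P | q ≤ r}.Infinite} :=
      fun n => Nat.rec ⟨p, hinf'⟩ (fun _ t => g t) n
    have hanti : StrictAnti (fun n => (f n).1) := by
      apply strictAnti_nat_of_succ_lt
      intro n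
      show (f (n+1)).1 < (f n).1
      exact hg (f n)
    exact hdesc ⟨fun n => (f n).1, hanti⟩
end

section
/- The lattice of shifted Young diagrams with the weight function w(p) = 1 for diagonal cells and w(p) = 2 for off-diagonal cells satisfies the weighted differential condition with r = 1: for every strict partition λ, the sum of w over addable cells exceeds the sum of w over removable cells by exactly 1. -/
/-- `D` is (the cell set of) a shifted Young diagram: a finite order ideal of the
octant `{(i,j) : 1 ≤ i ≤ j}` with the componentwise order. -/
def OctIdeal (D : Set (ℕ × ℕ)) : Prop :=
  D.Finite ∧ (∀ p ∈ D, 1 ≤ p.1 ∧ p.1 ≤ p.2) ∧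
    ∀ p ∈ D, ∀ q : ℕ × ℕ, 1 ≤ q.1 → q.1 ≤ q.2 → q.1 ≤ p.1 → q.2 ≤ p.2 → q ∈ D

/-- The weight: 1 on diagonal cells, 2 off the diagonal. -/
def shiftedWt (p : ℕ × ℕ) : ℕ := if p.1 = p.2 then 1 else 2

open Classical in
/-- The length of row `i` of the diagram `D`. -/
noncomputable def rowLen (D : Set (ℕ × ℕ)) (i : ℕ) : ℕ :=
  if (i, i) ∈ D then sSup {j | (i, j) ∈ D} + 1 - i else 0

/-- The largest diagonal index of the diagram. -/
noncomputable def diagMax (D : Set (ℕ × ℕ)) : ℕ := sSup {i | (i, i) ∈ D}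

section aux

variable {D : Set (ℕ × ℕ)} (hD : OctIdeal D)
include hD

lemma row_bdd (i : ℕ) : BddAbove {j | (i, j) ∈ D} := by
  have : {j | (i, j) ∈ D} ⊆ Prod.snd '' D := fun j hj => ⟨(i, j), hj, rfl⟩
  exact ((hD.1.image Prod.snd).subset this).bddAbove

lemma diag_bdd : BddAbove {i | (i, i) ∈ D} := by
  have : {i | (i, i) ∈ D} ⊆ Prod.fst '' D := fun i hi => ⟨(i, i), hi, rfl⟩
  exact ((hD.1.image Prod.fst).subset this).bddAbove

lemma diag_mem {i j : ℕ} (h : (i, j) ∈ D) : (i, i) ∈ D :=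
  hD.2.2 _ h (i, i) (hD.2.1 _ h).1 le_rfl le_rfl (hD.2.1 _ h).2

lemma mem_iff (i j : ℕ) : (i, j) ∈ D ↔ 1 ≤ i ∧ i ≤ j ∧ j < i + rowLen D i := by
  by_cases hd : (i, i) ∈ D
  · have hb := row_bdd hD i
    have hiS : i ≤ sSup {j | (i, j) ∈ D} := le_csSup hb hd
    have hr : rowLen D i = sSup {j | (i, j) ∈ D} + 1 - i := by
      simp [rowLen, hd]
    constructor
    · intro h
      have h1 := hD.2.1 _ h
      have h2 : j ≤ sSup {j | (i, j) ∈ D} := le_csSup hb h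
      exact ⟨h1.1, h1.2, by omega⟩
    · rintro ⟨h1, h2, h3⟩
      have hmem : (i, sSup {j | (i, j) ∈ D}) ∈ D := Nat.sSup_mem ⟨i, hd⟩ hb
      exact hD.2.2 _ hmem (i, j) h1 h2 le_rfl (by omega)
  · have hr : rowLen D i = 0 := by simp [rowLen, hd]
    constructor
    · intro h; exact absurd (diag_mem hD h) hd
    · rintro ⟨h1, h2, h3⟩; omega

lemma rpos_iff (i : ℕ) : 0 < rowLen D i ↔ (i, i) ∈ D := by
  constructor
  · intro h
    by_contra hd
    simp [rowLen, hd] at h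
  · intro h
    have := (mem_iff hD i i).mp h
    omega

lemma rowLen_step {i : ℕ} (hi : 1 ≤ i) (h : 0 < rowLen D (i + 1)) :
    rowLen D (i + 1) + 1 ≤ rowLen D i := by
  have h1 : (i + 1, i + rowLen D (i + 1)) ∈ D := by
    rw [mem_iff hD]; omega
  have h2 : (i, i + rowLen D (i + 1)) ∈ D :=
    hD.2.2 _ h1 _ hi (by omega) (by omega) le_rfl
  have := (mem_iff hD i (i + rowLen D (i + 1))).mp h2
  omega

lemma rowLen_chain {a c : ℕ} (ha : 1 ≤ a) (hac : a ≤ c) (h : 0 < rowLen D c) :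
    rowLen D c + (c - a) ≤ rowLen D a := by
  induction c, hac using Nat.le_induction with
  | base => omega
  | succ c hc ih =>
    have h1 : 1 ≤ c := le_trans ha hc
    have h2 := rowLen_step hD h1 h
    have h3 := ih (by omega)
    omega

lemma le_diagMax {i : ℕ} (h : (i, i) ∈ D) : i ≤ diagMax D :=
  le_csSup (diag_bdd hD) h

lemma rowLen_gt_diagMax {i : ℕ} (h : diagMax D < i) : rowLen D i = 0 := by
  by_contra hr
  have := le_diagMax hD ((rpos_iff hD i).mp (Nat.pos_of_ne_zero hr))
  omega

lemma rpos_of_le {i : ℕ} (h1 : 1 ≤ i) (h2 : i ≤ diagMax D) : 0 < rowLen D i := by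
  have hne : {k | (k, k) ∈ D}.Nonempty := by
    by_contra h
    rw [Set.not_nonempty_iff_eq_empty] at h
    have : diagMax D = 0 := by simp [diagMax, h]
    omega
  have hK : (diagMax D, diagMax D) ∈ D := Nat.sSup_mem hne (diag_bdd hD)
  have : (i, i) ∈ D := hD.2.2 _ hK (i, i) h1 le_rfl h2 h2
  exact (rpos_iff hD i).mpr this

lemma addable_iff (q : ℕ × ℕ) :
    (q ∉ D ∧ OctIdeal (insert q D)) ↔
      ∃ i, 1 ≤ i ∧ i ≤ diagMax D + 1 ∧
        (i = 1 ∨ rowLen D i + 2 ≤ rowLen D (i - 1)) ∧ q = (i, i + rowLen D i) := by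
  constructor
  · rintro ⟨hq, hI⟩
    obtain ⟨x, y⟩ := q
    have hx : 1 ≤ x ∧ x ≤ y := hI.2.1 (x, y) (Set.mem_insert _ _)
    -- y = x + rowLen D x
    have hylt : ¬ (x + rowLen D x < y) := by
      intro hcon
      have hm : (x, x + rowLen D x) ∈ insert (x, y) D :=
        hI.2.2 (x, y) (Set.mem_insert _ _) _ hx.1 (by omega) le_rfl (by omega)
      rcases hm with hm | hm
      · simp only [Prod.mk.injEq] at hm
        omega
      · have := (mem_iff hD x (x + rowLen D x)).mp hm
        omega
    have hyge : ¬ (y < x + rowLen D x) := by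
      intro hcon
      exact hq ((mem_iff hD x y).mpr ⟨hx.1, hx.2, hcon⟩)
    have hy : y = x + rowLen D x := by omega
    subst hy
    refine ⟨x, hx.1, ?_, ?_, rfl⟩
    · by_contra hcon
      push_neg at hcon
      have hx2 : 2 ≤ x := by omega
      have hm : (x - 1, x - 1) ∈ insert (x, x + rowLen D x) D :=
        hI.2.2 (x, x + rowLen D x) (Set.mem_insert _ _) _ (by omega) le_rfl (by omega) (by omega)
      rcases hm with hm | hm
      · simp only [Prod.mk.injEq] at hm; omega
      · have := le_diagMax hD (diag_mem hD hm)
        omega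
    · by_cases hx1 : x = 1
      · exact Or.inl hx1
      · right
        have hx2 : 2 ≤ x := by omega
        have hm : (x - 1, x + rowLen D x) ∈ insert (x, x + rowLen D x) D :=
          hI.2.2 (x, x + rowLen D x) (Set.mem_insert _ _) _ (by omega) (by omega)
            (by omega) le_rfl
        rcases hm with hm | hm
        · simp only [Prod.mk.injEq] at hm; omega
        · have := (mem_iff hD (x - 1) (x + rowLen D x)).mp hm
          omega
  · rintro ⟨i, hi1, hi2, hcond, rfl⟩
    have hnotmem : (i, i + rowLen D i) ∉ D := by
      intro h
      have := (mem_iff hD i (i + rowLen D i)).mp h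
      omega
    refine ⟨hnotmem, ?_, ?_, ?_⟩
    · exact hD.1.insert _
    · rintro p (hp | hp)
      · subst hp; exact ⟨hi1, by omega⟩
      · exact hD.2.1 p hp
    · rintro p (hp | hp) q hq1 hq2 hq3 hq4
      · subst hp
        obtain ⟨a, b⟩ := q
        simp only at hq1 hq2 hq3 hq4
        by_cases hqeq : a = i ∧ b = i + rowLen D i
        · left; simp [hqeq.1, hqeq.2]
        · right
          rw [mem_iff hD]
          refine ⟨hq1, hq2, ?_⟩
          by_cases hai : a = i
          · subst hai; omega
          · have hai' : a < i := by omega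
            have hi2' : 2 ≤ i := by omega
            have hcond' : rowLen D i + 2 ≤ rowLen D (i - 1) := by
              rcases hcond with h | h
              · omega
              · exact h
            have hri1 : 0 < rowLen D (i - 1) := by omega
            have := rowLen_chain hD hq1 (show a ≤ i - 1 by omega) hri1
            omega
      · right
        exact hD.2.2 p hp q hq1 hq2 hq3 hq4

lemma removable_iff (p : ℕ × ℕ) :
    (p ∈ D ∧ OctIdeal (D \ {p})) ↔
      ∃ i, 1 ≤ i ∧ i ≤ diagMax D ∧
        (rowLen D i = 1 ∨ rowLen D (i + 1) + 2 ≤ rowLen D i) ∧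
        p = (i, i + rowLen D i - 1) := by
  constructor
  · rintro ⟨hp, hI⟩
    obtain ⟨x, y⟩ := p
    have hm := (mem_iff hD x y).mp hp
    have hrx : 0 < rowLen D x := by omega
    have hxK : x ≤ diagMax D := le_diagMax hD ((rpos_iff hD x).mp hrx)
    -- y is the last cell of its row
    have htop : (x, y + 1) ∉ D := by
      intro hcon
      have hne : (x, y + 1) ∈ D \ {(x, y)} := ⟨hcon, by simp⟩
      have := hI.2.2 _ hne (x, y) (by omega) (by omega) le_rfl (by omega)
      simp at this
    have hy : y = x + rowLen D x - 1 := by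
      by_contra hcon
      have hlt : y + 1 < x + rowLen D x := by omega
      exact htop ((mem_iff hD x (y + 1)).mpr ⟨by omega, by omega, hlt⟩)
    subst hy
    refine ⟨x, by omega, hxK, ?_, rfl⟩
    by_cases h1 : rowLen D x = 1
    · exact Or.inl h1
    · right
      have h2 : 2 ≤ rowLen D x := by omega
      have hbelow : (x + 1, x + rowLen D x - 1) ∉ D := by
        intro hcon
        have hne : (x + 1, x + rowLen D x - 1) ∈ D \ {(x, x + rowLen D x - 1)} :=
          ⟨hcon, by simp⟩
        have := hI.2.2 _ hne (x, x + rowLen D x - 1) (by omega) (by omega)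
          (by omega) le_rfl
        simp at this
      have hiff : ¬ (1 ≤ x + 1 ∧ x + 1 ≤ x + rowLen D x - 1 ∧
          x + rowLen D x - 1 < x + 1 + rowLen D (x + 1)) :=
        fun hc => hbelow ((mem_iff hD (x + 1) (x + rowLen D x - 1)).mpr hc)
      omega
  · rintro ⟨i, hi1, hi2, hcond, rfl⟩
    have hri : 0 < rowLen D i := rpos_of_le hD hi1 hi2
    have hpmem : (i, i + rowLen D i - 1) ∈ D :=
      (mem_iff hD i (i + rowLen D i - 1)).mpr ⟨hi1, by omega, by omega⟩
    refine ⟨hpmem, hD.1.diff, ?_, ?_⟩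
    · intro p hp; exact hD.2.1 p hp.1
    · rintro ⟨u, v⟩ ⟨hp, hpne⟩ ⟨a, b⟩ hq1 hq2 hq3 hq4
      simp only at hq1 hq2 hq3 hq4
      have hqD : (a, b) ∈ D := hD.2.2 _ hp (a, b) hq1 hq2 hq3 hq4
      refine ⟨hqD, ?_⟩
      simp only [Set.mem_singleton_iff, Prod.mk.injEq, not_and]
      intro ha hb
      subst ha
      subst hb
      have hmuv := (mem_iff hD u v).mp hp
      by_cases hui : u = a
      · subst hui
        apply hpne
        simp only [Set.mem_singleton_iff, Prod.mk.injEq]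
        exact ⟨trivial, by omega⟩
      · have hu1 : a + 1 ≤ u := by omega
        have hru : 0 < rowLen D u := by omega
        have hchain := rowLen_chain hD (show 1 ≤ a + 1 by omega) hu1 hru
        rcases hcond with h1 | h1
        · have : rowLen D (a + 1) = 0 := by
            by_contra hcon
            have := rowLen_step hD hq1 (Nat.pos_of_ne_zero hcon)
            omega
          omega
        · omega

end aux

/-- The lattice of shifted Young diagrams with weight 1 on the diagonal and
2 off the diagonal satisfies the weighted differential condition with `r = 1`:
the weights of the addable cells sum to one more than the weights of the
removable cells. -/
theorem stmt10 (D : Set (ℕ × ℕ)) (hD : OctIdeal D) :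
    ∑ᶠ q ∈ {q : ℕ × ℕ | q ∉ D ∧ OctIdeal (insert q D)}, shiftedWt q =
      (∑ᶠ p ∈ {p : ℕ × ℕ | p ∈ D ∧ OctIdeal (D \ {p})}, shiftedWt p) + 1 := by
  classical
  have hAset : {q : ℕ × ℕ | q ∉ D ∧ OctIdeal (insert q D)} =
      (fun i => (i, i + rowLen D i)) ''
        ↑((Finset.Icc 1 (diagMax D + 1)).filter
          (fun i => i = 1 ∨ rowLen D i + 2 ≤ rowLen D (i - 1))) := by
    ext q
    simp only [Set.mem_setOf_eq, Set.mem_image, Finset.mem_coe, Finset.mem_filter,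
      Finset.mem_Icc]
    rw [addable_iff hD q]
    constructor
    · rintro ⟨i, h1, h2, h3, h4⟩
      exact ⟨i, ⟨⟨h1, h2⟩, h3⟩, h4.symm⟩
    · rintro ⟨i, ⟨⟨h1, h2⟩, h3⟩, h4⟩
      exact ⟨i, h1, h2, h3, h4.symm⟩
  have hRset : {p : ℕ × ℕ | p ∈ D ∧ OctIdeal (D \ {p})} =
      (fun i => (i, i + rowLen D i - 1)) ''
        ↑((Finset.Icc 1 (diagMax D)).filter
          (fun i => rowLen D i = 1 ∨ rowLen D (i + 1) + 2 ≤ rowLen D i)) := by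
    ext p
    simp only [Set.mem_setOf_eq, Set.mem_image, Finset.mem_coe, Finset.mem_filter,
      Finset.mem_Icc]
    rw [removable_iff hD p]
    constructor
    · rintro ⟨i, h1, h2, h3, h4⟩
      exact ⟨i, ⟨⟨h1, h2⟩, h3⟩, h4.symm⟩
    · rintro ⟨i, ⟨⟨h1, h2⟩, h3⟩, h4⟩
      exact ⟨i, h1, h2, h3, h4.symm⟩
  have hinjA : Set.InjOn (fun i => (i, i + rowLen D i))
      ↑((Finset.Icc 1 (diagMax D + 1)).filter
        (fun i => i = 1 ∨ rowLen D i + 2 ≤ rowLen D (i - 1))) := by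
    intro a _ b _ h
    simpa using congrArg Prod.fst h
  have hinjR : Set.InjOn (fun i => (i, i + rowLen D i - 1))
      ↑((Finset.Icc 1 (diagMax D)).filter
        (fun i => rowLen D i = 1 ∨ rowLen D (i + 1) + 2 ≤ rowLen D i)) := by
    intro a _ b _ h
    simpa using congrArg Prod.fst h
  rw [hAset, hRset, finsum_mem_image hinjA, finsum_mem_image hinjR,
    finsum_mem_coe_finset, finsum_mem_coe_finset]
  rw [Finset.sum_filter, Finset.sum_filter]
  have hsplit : ∑ i ∈ Finset.Icc 1 (diagMax D + 1),
      (if i = 1 ∨ rowLen D i + 2 ≤ rowLen D (i - 1) then shiftedWt (i, i + rowLen D i) else 0) =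
      (if (1 : ℕ) = 1 ∨ rowLen D 1 + 2 ≤ rowLen D 0 then shiftedWt (1, 1 + rowLen D 1) else 0) +
      ∑ i ∈ Finset.Icc 1 (diagMax D),
        (if i + 1 = 1 ∨ rowLen D (i + 1) + 2 ≤ rowLen D i then
          shiftedWt (i + 1, i + 1 + rowLen D (i + 1)) else 0) := by
    have h1 : Finset.Icc 1 (diagMax D + 1) = insert 1 (Finset.Icc 2 (diagMax D + 1)) := by
      ext x
      simp only [Finset.mem_Icc, Finset.mem_insert]
      omega
    rw [h1, Finset.sum_insert (by simp)]
    congr 1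
    apply Finset.sum_nbij' (fun i => i - 1) (fun i => i + 1)
    · intro a ha; simp only [Finset.mem_Icc] at *; omega
    · intro a ha; simp only [Finset.mem_Icc] at *; omega
    · intro a ha; simp only [Finset.mem_Icc] at ha; omega
    · intro a ha; simp only [Finset.mem_Icc] at ha; omega
    · intro a ha
      simp only [Finset.mem_Icc] at ha
      have hh : a - 1 + 1 = a := by omega
      rw [hh]
  rw [hsplit]
  by_cases hK0 : diagMax D = 0
  · have hr1 : rowLen D 1 = 0 := by
      by_contra h
      have := le_diagMax hD ((rpos_iff hD 1).mp (Nat.pos_of_ne_zero h))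
      omega
    rw [hK0]
    simp [hr1, shiftedWt]
  · have hK1 : 1 ≤ diagMax D := by omega
    have hr1 : 0 < rowLen D 1 := rpos_of_le hD le_rfl hK1
    have hfirst : (if (1 : ℕ) = 1 ∨ rowLen D 1 + 2 ≤ rowLen D 0 then
        shiftedWt (1, 1 + rowLen D 1) else 0) = 2 := by
      rw [if_pos (Or.inl rfl)]
      simp only [shiftedWt]
      rw [if_neg (by omega)]
    rw [hfirst]
    have hpoint : ∀ i ∈ Finset.Icc 1 (diagMax D),
        (if rowLen D i = 1 ∨ rowLen D (i + 1) + 2 ≤ rowLen D i then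
          shiftedWt (i, i + rowLen D i - 1) else 0) =
        (if i + 1 = 1 ∨ rowLen D (i + 1) + 2 ≤ rowLen D i then
          shiftedWt (i + 1, i + 1 + rowLen D (i + 1)) else 0)
          + (if i = diagMax D then 1 else 0) := by
      intro i hi
      simp only [Finset.mem_Icc] at hi
      have hri : 0 < rowLen D i := rpos_of_le hD hi.1 hi.2
      by_cases hiK : i = diagMax D
      · have hrK1 : rowLen D (i + 1) = 0 := rowLen_gt_diagMax hD (by omega)
        simp only [shiftedWt]
        split_ifs <;> omega
      · have hik : i + 1 ≤ diagMax D := by omega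
        have hri1 : 0 < rowLen D (i + 1) := rpos_of_le hD (by omega) hik
        have hstep := rowLen_step hD hi.1 hri1
        simp only [shiftedWt]
        split_ifs <;> omega
    rw [Finset.sum_congr rfl hpoint, Finset.sum_add_distrib,
      Finset.sum_ite_eq' (Finset.Icc 1 (diagMax D))]
    rw [if_pos (by simp only [Finset.mem_Icc]; omega)]
    omega
end

section
/- For a nonempty strict partition λ with shifted diagram D: if the last part of λ equals 1, then the number of addable cells of D equals the number of removable cells of D, and the unique removable diagonal cell contributes weight 1 while all other removable and all addable cells are off-diagonal; if the last part of λ is greater than 1 (or λ is empty), the number of addable cells equals the number of removable cells plus 1, and exactly one addable cell is diagonal. -/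
private lemma keyMono (k : ℕ) (l : ℕ → ℕ)
    (hstrict : ∀ i, 1 ≤ i → i < k → l (i + 1) < l i) :
    ∀ a b : ℕ, 1 ≤ a → a ≤ b → b ≤ k → b + l b ≤ a + l a := by
  intro a b ha hab hbk
  induction b with
  | zero => omega
  | succ n ih =>
    rcases eq_or_lt_of_le hab with h | h
    · subst h; omega
    · have h2 : l (n+1) < l n := hstrict n (by omega) (by omega)
      have := ih (by omega) (by omega)
      omega

/-- For the shifted diagram `D` of a strict partition `l₁ > ... > l_k > 0`:
if the last part is 1, then addable and removable cells are equinumerous, there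
is a unique removable diagonal cell (of weight 1) and all other removable cells
and all addable cells are off-diagonal; otherwise (including the empty
partition) there is one more addable cell than removable cells and exactly one
addable cell is diagonal. -/
theorem stmt11 (k : ℕ) (l : ℕ → ℕ)
    (hpos : ∀ i, 1 ≤ i → i ≤ k → 0 < l i)
    (hstrict : ∀ i, 1 ≤ i → i < k → l (i + 1) < l i) :
    let D : Set (ℕ × ℕ) := {p | 1 ≤ p.1 ∧ p.1 ≤ k ∧ p.1 ≤ p.2 ∧ p.2 < p.1 + l p.1}
    let Rem : Set (ℕ × ℕ) := {p | p ∈ D ∧ OctIdeal (D \ {p})}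
    let Add : Set (ℕ × ℕ) := {q | q ∉ D ∧ OctIdeal (insert q D)}
    if 1 ≤ k ∧ l k = 1 then
      Add.ncard = Rem.ncard ∧
      (∃! p : ℕ × ℕ, p ∈ Rem ∧ p.1 = p.2) ∧
      (∀ q ∈ Add, q.1 ≠ q.2)
    else
      Add.ncard = Rem.ncard + 1 ∧ (∃! q : ℕ × ℕ, q ∈ Add ∧ q.1 = q.2) := by
  intro D Rem Add
  have hmono := keyMono k l hstrict
  have hDmem : ∀ a b : ℕ, (a, b) ∈ D ↔ 1 ≤ a ∧ a ≤ k ∧ a ≤ b ∧ b < a + l a := fun a b => Iff.rfl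
  have hfin : D.Finite := by
    apply Set.Finite.subset (Set.finite_Icc (1,1) (k, k + l 1))
    rintro ⟨i, j⟩ hp
    obtain ⟨h1, h2, h3, h4⟩ := (hDmem i j).1 hp
    have := hmono 1 i le_rfl h1 h2
    simp only [Set.mem_Icc, Prod.mk_le_mk]
    omega
  have hideal : ∀ p ∈ D, ∀ q : ℕ × ℕ, 1 ≤ q.1 → q.1 ≤ q.2 → q.1 ≤ p.1 → q.2 ≤ p.2 → q ∈ D := by
    rintro ⟨a, b⟩ hp ⟨c, d⟩ h1 h2 h3 h4
    obtain ⟨hp1, hp2, hp3, hp4⟩ := (hDmem a b).1 hp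
    simp only at h1 h2 h3 h4
    have := hmono c a h1 h3 hp2
    exact (hDmem c d).2 (by omega)
  have hRemIff : ∀ p : ℕ × ℕ, p ∈ Rem ↔ p ∈ D ∧ ∀ q ∈ D, p.1 ≤ q.1 → p.2 ≤ q.2 → q = p := by
    intro p
    constructor
    · rintro ⟨hpD, hOI⟩
      obtain ⟨hf, ho, hi⟩ := hOI
      refine ⟨hpD, fun q hq h1 h2 => ?_⟩
      by_contra hne
      have hq' : q ∈ D \ {p} := ⟨hq, hne⟩
      have := hi q hq' p ((hDmem p.1 p.2).1 hpD).1 ((hDmem p.1 p.2).1 hpD).2.2.1 h1 h2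
      exact this.2 rfl
    · rintro ⟨hpD, hmax⟩
      obtain ⟨w1, w2, w3, w4⟩ := (hDmem p.1 p.2).1 hpD
      refine ⟨hpD, hfin.diff, fun q hq => ⟨((hDmem q.1 q.2).1 hq.1).1, ((hDmem q.1 q.2).1 hq.1).2.2.1⟩, ?_⟩
      intro q hq r hr1 hr2 hr3 hr4
      refine ⟨hideal q hq.1 r hr1 hr2 hr3 hr4, ?_⟩
      intro hrp
      rw [Set.mem_singleton_iff] at hrp
      subst hrp
      exact hq.2 (Set.mem_singleton_iff.2 (hmax q hq.1 hr3 hr4))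
  have hAddIff : ∀ q : ℕ × ℕ, q ∈ Add ↔ q ∉ D ∧ 1 ≤ q.1 ∧ q.1 ≤ q.2 ∧
      ∀ r : ℕ × ℕ, 1 ≤ r.1 → r.1 ≤ r.2 → r.1 ≤ q.1 → r.2 ≤ q.2 → r ≠ q → r ∈ D := by
    intro q
    constructor
    · rintro ⟨hqD, hOI⟩
      obtain ⟨hf, ho, hi⟩ := hOI
      have hoq := ho q (Set.mem_insert _ _)
      refine ⟨hqD, hoq.1, hoq.2, fun r h1 h2 h3 h4 hne => ?_⟩
      have := hi q (Set.mem_insert _ _) r h1 h2 h3 h4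
      rcases this with h | h
      · exact absurd h hne
      · exact h
    · rintro ⟨hqD, h1, h2, hall⟩
      refine ⟨hqD, hfin.insert q, ?_, ?_⟩
      · rintro p (rfl | hp)
        · exact ⟨h1, h2⟩
        · exact ⟨((hDmem p.1 p.2).1 hp).1, ((hDmem p.1 p.2).1 hp).2.2.1⟩
      · rintro p (rfl | hp) r hr1 hr2 hr3 hr4
        · by_cases hrq : r = p
          · exact hrq ▸ Set.mem_insert _ _
          · exact Set.mem_insert_of_mem _ (hall r hr1 hr2 hr3 hr4 hrq)
        · exact Set.mem_insert_of_mem _ (hideal p hp r hr1 hr2 hr3 hr4)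
  set S : Finset ℕ := (Finset.Icc 1 k).filter (fun i => i = k ∨ l (i+1) + 1 < l i) with hSdef
  set T : Finset ℕ := (Finset.Icc 1 k).filter (fun i => i = 1 ∨ l i + 1 < l (i-1)) with hTdef
  have hSmem : ∀ i, i ∈ S ↔ (1 ≤ i ∧ i ≤ k) ∧ (i = k ∨ l (i+1) + 1 < l i) := by
    intro i; rw [hSdef]; simp [Finset.mem_filter, Finset.mem_Icc, and_assoc]
  have hTmem : ∀ i, i ∈ T ↔ (1 ≤ i ∧ i ≤ k) ∧ (i = 1 ∨ l i + 1 < l (i-1)) := by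
    intro i; rw [hTdef]; simp [Finset.mem_filter, Finset.mem_Icc, and_assoc]
  -- explicit description of Rem
  have hRemEq : Rem = ↑(S.image (fun i => (i, i + l i - 1))) := by
    ext p
    rw [hRemIff]
    simp only [Finset.coe_image, Set.mem_image, Finset.mem_coe]
    constructor
    · rintro ⟨hpD, hmax⟩
      obtain ⟨h1, h2, h3, h4⟩ := (hDmem p.1 p.2).1 hpD
      have hli : 0 < l p.1 := hpos p.1 h1 h2
      have hp2 : p.2 = p.1 + l p.1 - 1 := by
        by_contra hne
        have hlt : p.2 + 1 < p.1 + l p.1 := by omega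
        have hq : (p.1, p.2 + 1) ∈ D := (hDmem p.1 (p.2+1)).2 (by omega)
        have := hmax _ hq le_rfl (by omega)
        have := congrArg Prod.snd this
        simp only at this
        omega
      refine ⟨p.1, (hSmem p.1).2 ⟨⟨h1, h2⟩, ?_⟩, ?_⟩
      · by_contra hcon
        push_neg at hcon
        obtain ⟨hik, hl⟩ := hcon
        have hik' : p.1 < k := lt_of_le_of_ne h2 hik
        have hl1 : l (p.1 + 1) < l p.1 := hstrict p.1 h1 hik'
        have hl2 : 0 < l (p.1 + 1) := hpos _ (by omega) (by omega)
        have hq : (p.1 + 1, p.2) ∈ D := (hDmem (p.1+1) p.2).2 (by omega)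
        have := hmax _ hq (by omega) le_rfl
        have := congrArg Prod.fst this
        simp only at this
        omega
      · exact Prod.ext rfl (by omega)
    · rintro ⟨i, hiS, rfl⟩
      obtain ⟨⟨hi1, hik⟩, hcond⟩ := (hSmem i).1 hiS
      have hli : 0 < l i := hpos i hi1 hik
      constructor
      · exact (hDmem i (i + l i - 1)).2 (by omega)
      · rintro ⟨a, b⟩ hq h1 h2
        simp only at h1 h2 ⊢
        obtain ⟨w1, w2, w3, w4⟩ := (hDmem a b).1 hq
        have hub : a + l a ≤ i + l i := hmono i a hi1 h1 w2
        have ha : a = i := by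
          by_contra hne
          have hai : i + 1 ≤ a := by omega
          have hik2 : i < k := by omega
          rcases hcond with h | h
          · omega
          · have : a + l a ≤ (i+1) + l (i+1) := hmono (i+1) a (by omega) hai w2
            omega
        subst ha
        have : b = a + l a - 1 := by omega
        simp [this]
  have hmemAdd_i : ∀ i ∈ T, ((i, i + l i) : ℕ × ℕ) ∈ Add := by
    intro i hiT
    obtain ⟨⟨hi1, hik⟩, hcond⟩ := (hTmem i).1 hiT
    have hli : 0 < l i := hpos i hi1 hik
    rw [hAddIff]
    refine ⟨fun h => by have := (hDmem i (i + l i)).1 h; omega, hi1, by omega, ?_⟩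
    rintro ⟨a, b⟩ h1 h2 h3 h4 hne
    simp only at h1 h2 h3 h4
    refine (hDmem a b).2 ⟨h1, by omega, h2, ?_⟩
    rcases eq_or_lt_of_le h3 with rfl | hlt
    · have hbne : b ≠ a + l a := fun h => hne (by rw [h])
      omega
    · have hi2 : i ≠ 1 := by omega
      have hl : l i + 1 < l (i-1) := by tauto
      have hub : (i-1) + l (i-1) ≤ a + l a := hmono a (i-1) h1 (by omega) (by omega)
      omega
  have hmemAdd_c : (k = 0 ∨ 2 ≤ l k) → ((k+1, k+1) : ℕ × ℕ) ∈ Add := by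
    intro hc
    rw [hAddIff]
    refine ⟨fun h => by have := (hDmem (k+1) (k+1)).1 h; omega, by omega, le_rfl, ?_⟩
    rintro ⟨a, b⟩ h1 h2 h3 h4 hne
    simp only at h1 h2 h3 h4
    have hak : a ≤ k := by
      rcases eq_or_lt_of_le h3 with rfl | h
      · exact absurd (show (k+1, b) = ((k+1 : ℕ), (k+1 : ℕ)) from Prod.ext_iff.mpr ⟨rfl, show b = k+1 by omega⟩) hne
      · omega
    have hk1 : 1 ≤ k := le_trans h1 hak
    have hlk : 2 ≤ l k := by rcases hc with h | h <;> omega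
    have hub : k + l k ≤ a + l a := hmono a k h1 hak le_rfl
    exact (hDmem a b).2 ⟨h1, hak, h2, by omega⟩
  have hcNotAdd : 1 ≤ k → l k = 1 → ((k+1, k+1) : ℕ × ℕ) ∉ Add := by
    intro hk hlk hmem
    rw [hAddIff] at hmem
    obtain ⟨-, -, -, hall⟩ := hmem
    have : ((k, k+1) : ℕ × ℕ) ∈ D := hall (k, k+1) hk (by omega) (by omega) le_rfl
      (by simp only [ne_eq, Prod.mk.injEq]; omega)
    have := (hDmem k (k+1)).1 this
    omega
  have hAddChar : ∀ q ∈ Add, q = ((k+1, k+1) : ℕ × ℕ) ∨ ∃ i ∈ T, q = (i, i + l i) := by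
    rintro ⟨a, b⟩ hq
    rw [hAddIff] at hq
    obtain ⟨hqD, h1, h2, hall⟩ := hq
    simp only at h1 h2 hall hqD
    rcases lt_trichotomy a (k+1) with hak | hak | hak
    swap
    · -- a = k + 1 : show b = k + 1
      left
      have hb : b = k + 1 := by
        by_contra hb
        have hb2 : k + 2 ≤ b := by omega
        have : ((k+1, b-1) : ℕ × ℕ) ∈ D := hall (k+1, b-1) (by omega) (by omega) (by omega) (by omega)
          (by simp only [ne_eq, Prod.mk.injEq]; omega)
        have := (hDmem (k+1) (b-1)).1 this
        omega
      simp [hak, hb]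
    swap
    · -- a ≥ k + 2 : impossible
      exfalso
      have : ((a-1, a-1) : ℕ × ℕ) ∈ D := hall (a-1, a-1) (by omega) le_rfl (by omega) (by omega)
        (by simp only [ne_eq, Prod.mk.injEq]; omega)
      have := (hDmem (a-1) (a-1)).1 this
      omega
    · -- a ≤ k
      right
      have hak' : a ≤ k := by omega
      have hla : 0 < l a := hpos a h1 hak'
      have hbge : a + l a ≤ b := by
        by_contra hcon
        exact hqD ((hDmem a b).2 (by omega))
      have hb : b = a + l a := by
        by_contra hb
        have hb2 : a + l a + 1 ≤ b := by omega
        have : ((a, b-1) : ℕ × ℕ) ∈ D := hall (a, b-1) h1 (by omega) le_rfl (by omega)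
          (by simp only [ne_eq, Prod.mk.injEq]; omega)
        have := (hDmem a (b-1)).1 this
        omega
      refine ⟨a, (hTmem a).2 ⟨⟨h1, hak'⟩, ?_⟩, by simp [hb]⟩
      by_cases ha1 : a = 1
      · exact Or.inl ha1
      · right
        have : ((a-1, b) : ℕ × ℕ) ∈ D := hall (a-1, b) (by omega) (by omega) (by omega) le_rfl
          (by simp only [ne_eq, Prod.mk.injEq]; omega)
        have := (hDmem (a-1) b).1 this
        omega
  -- cardinalities
  have hfinj : Function.Injective (fun i : ℕ => ((i, i + l i - 1) : ℕ × ℕ)) :=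
    fun a b h => congrArg Prod.fst h
  have hginj : Function.Injective (fun i : ℕ => ((i, i + l i) : ℕ × ℕ)) :=
    fun a b h => congrArg Prod.fst h
  have hRemCard : Rem.ncard = S.card := by
    rw [hRemEq, Set.ncard_coe_finset, Finset.card_image_of_injective _ hfinj]
  have hTS : T.card = S.card := by
    rcases Nat.eq_zero_or_pos k with hk | hk
    · rw [hSdef, hTdef, hk]
      simp
    · have hkS : k ∈ S := (hSmem k).2 ⟨⟨hk, le_rfl⟩, Or.inl rfl⟩
      have hTeq : T = insert 1 ((S.erase k).image (· + 1)) := by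
        ext i
        rw [hTmem]
        simp only [Finset.mem_insert, Finset.mem_image, Finset.mem_erase]
        constructor
        · rintro ⟨⟨hi1, hik⟩, hcond⟩
          rcases Nat.eq_or_lt_of_le hi1 with h1 | h1
          · exact Or.inl h1.symm
          · right
            refine ⟨i - 1, ⟨by omega, ?_⟩, by omega⟩
            rw [hSmem]
            have hcond' : l i + 1 < l (i-1) := by
              rcases hcond with h | h
              · omega
              · exact h
            refine ⟨⟨by omega, by omega⟩, Or.inr ?_⟩
            have : i - 1 + 1 = i := by omega
            rw [this]
            exact hcond'
        · rintro (rfl | ⟨j, ⟨hjk, hjS⟩, rfl⟩)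
          · exact ⟨⟨le_rfl, hk⟩, Or.inl rfl⟩
          · obtain ⟨⟨hj1, hjk2⟩, hjc⟩ := (hSmem j).1 hjS
            have hjc' : l (j+1) + 1 < l j := by
              rcases hjc with h | h
              · exact absurd h hjk
              · exact h
            refine ⟨⟨by omega, by omega⟩, Or.inr ?_⟩
            simpa using hjc'
      rw [hTeq, Finset.card_insert_of_notMem, Finset.card_image_of_injective _ (add_left_injective 1),
        Finset.card_erase_of_mem hkS]
      · have : 0 < S.card := Finset.card_pos.2 ⟨k, hkS⟩
        omega
      · simp only [Finset.mem_image, Finset.mem_erase]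
        rintro ⟨j, ⟨hjk, hjS⟩, hj1⟩
        have := ((hSmem j).1 hjS).1.1
        omega
  have hoffdiag : ∀ i ∈ T, (i : ℕ) ≠ i + l i := by
    intro i hiT
    obtain ⟨⟨hi1, hik⟩, -⟩ := (hTmem i).1 hiT
    have := hpos i hi1 hik
    omega
  split_ifs with hcase
  · -- last part is 1
    obtain ⟨hk1, hlk⟩ := hcase
    have hAddEq : Add = ↑(T.image (fun i => (i, i + l i))) := by
      ext q
      simp only [Finset.coe_image, Set.mem_image, Finset.mem_coe]
      constructor
      · intro hq
        rcases hAddChar q hq with rfl | ⟨i, hi, rfl⟩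
        · exact absurd hq (hcNotAdd hk1 hlk)
        · exact ⟨i, hi, rfl⟩
      · rintro ⟨i, hi, rfl⟩
        exact hmemAdd_i i hi
    refine ⟨?_, ?_, ?_⟩
    · rw [hAddEq, Set.ncard_coe_finset, Finset.card_image_of_injective _ hginj, hTS, hRemCard]
    · refine ⟨(k, k), ⟨?_, rfl⟩, ?_⟩
      · rw [hRemEq]
        simp only [Finset.coe_image, Set.mem_image, Finset.mem_coe]
        refine ⟨k, (hSmem k).2 ⟨⟨hk1, le_rfl⟩, Or.inl rfl⟩, ?_⟩
        rw [show k + l k - 1 = k by omega]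
      · rintro ⟨a, b⟩ ⟨hmem, hd⟩
        simp only at hd
        rw [hRemEq] at hmem
        simp only [Finset.coe_image, Set.mem_image, Finset.mem_coe] at hmem
        obtain ⟨i, hiS, heq⟩ := hmem
        obtain ⟨⟨hi1, hik⟩, hcond⟩ := (hSmem i).1 hiS
        have h1 := congrArg Prod.fst heq
        have h2 := congrArg Prod.snd heq
        simp only at h1 h2
        have hli : 0 < l i := hpos i hi1 hik
        have hik2 : i = k := by
          rcases hcond with h | h
          · exact h
          · exfalso
            have := hpos (i+1) (by omega) (by omega)
            omega
        rw [show a = k by omega, show b = k by omega]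
    · intro q hq
      rw [hAddEq] at hq
      simp only [Finset.coe_image, Set.mem_image, Finset.mem_coe] at hq
      obtain ⟨i, hiT, rfl⟩ := hq
      exact hoffdiag i hiT
  · -- last part is at least 2 (or empty partition)
    have hc2 : k = 0 ∨ 2 ≤ l k := by
      rcases Nat.eq_zero_or_pos k with hk | hk
      · exact Or.inl hk
      · right
        have := hpos k hk le_rfl
        have : l k ≠ 1 := fun h => hcase ⟨hk, h⟩
        omega
    have hcAdd := hmemAdd_c hc2
    have hAddEq : Add = ↑(insert ((k+1 : ℕ), (k+1 : ℕ)) (T.image (fun i => (i, i + l i)))) := by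
      ext q
      simp only [Finset.coe_insert, Set.mem_insert_iff, Finset.coe_image, Set.mem_image,
        Finset.mem_coe]
      constructor
      · intro hq
        rcases hAddChar q hq with rfl | ⟨i, hi, rfl⟩
        · exact Or.inl rfl
        · exact Or.inr ⟨i, hi, rfl⟩
      · rintro (rfl | ⟨i, hi, rfl⟩)
        · exact hcAdd
        · exact hmemAdd_i i hi
    have hcnotim : ((k+1 : ℕ), (k+1 : ℕ)) ∉ T.image (fun i => (i, i + l i)) := by
      simp only [Finset.mem_image]
      rintro ⟨i, hiT, heq⟩
      have := ((hTmem i).1 hiT).1.2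
      have h1 := congrArg Prod.fst heq
      simp only at h1
      omega
    constructor
    · rw [hAddEq, Set.ncard_coe_finset, Finset.card_insert_of_notMem hcnotim,
        Finset.card_image_of_injective _ hginj, hTS, hRemCard]
    · refine ⟨(k+1, k+1), ⟨hcAdd, rfl⟩, ?_⟩
      rintro ⟨a, b⟩ ⟨hmem, hd⟩
      simp only at hd
      subst hd
      rw [hAddEq] at hmem
      simp only [Finset.coe_insert, Set.mem_insert_iff, Finset.coe_image, Set.mem_image,
        Finset.mem_coe] at hmem
      rcases hmem with h | ⟨i, hiT, heq⟩
      · exact h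
      · exfalso
        have h1 := congrArg Prod.fst heq
        have h2 := congrArg Prod.snd heq
        simp only at h1 h2
        exact hoffdiag i hiT (by omega)
end
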